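/- Let T be a finite rooted tree in which every node has at most two children (e.g., an element of Mathlib's binary tree type Tree Bool, with a node marked when its label is true), and let k ≥ 1. If T contains at least k marked nodes, then there exists a node v of T such that the subtree rooted at v contains at least k and at most 2k − 1 marked nodes. (This is the greedy decomposition step in the proof of Lemma 4: the lowest node whose subtree contains at least k marked nodes has at most 2(k−1)+1 = 2k−1 marked nodes in its subtree, since each of its at most two children has fewer than k.) -/

import Mathlib

/-- The number of marked (label `true`) nodes of a binary tree. -/
def markedCount : Tree Bool → ℕ
  | BinaryTree.nil => 0
  | BinaryTree.node b l r => (if b then 1 else 0) + markedCount l + markedCount r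

/-- `isSubtree s t` holds when `s` is the subtree of `t` rooted at some node
of `t` (possibly `t` itself). -/
def isSubtree : Tree Bool → Tree Bool → Prop
  | s, BinaryTree.nil => s = BinaryTree.nil
  | s, BinaryTree.node b l r => s = BinaryTree.node b l r ∨ isSubtree s l ∨ isSubtree s r

/-- The greedy decomposition step in the proof of Lemma 4: if a binary tree has
at least `k ≥ 1` marked nodes, then some node roots a subtree with at least `k`
and at most `2k - 1` marked nodes. -/
theorem exists_balanced_subtree (T : Tree Bool) (k : ℕ) (hk : 1 ≤ k)
    (hT : k ≤ markedCount T) :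
    ∃ s : Tree Bool, isSubtree s T ∧ k ≤ markedCount s ∧ markedCount s ≤ 2 * k - 1 := by
  induction T with
  | nil => simp [markedCount] at hT; omega
  | node b l r ihl ihr =>
    by_cases hl : k ≤ markedCount l
    · obtain ⟨s, hs, h1, h2⟩ := ihl hl
      exact ⟨s, Or.inr (Or.inl hs), h1, h2⟩
    · by_cases hr : k ≤ markedCount r
      · obtain ⟨s, hs, h1, h2⟩ := ihr hr
        exact ⟨s, Or.inr (Or.inr hs), h1, h2⟩
      · refine ⟨Tree.node b l r, Or.inl rfl, hT, ?_⟩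
        simp only [markedCount] at hT ⊢
        split <;> omega
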